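/- Suppose Δ < 0. Let P = (x,y) ∈ C(ℚ) be a rational point on the Pell conic, and write x = r/n and y = s/n with integers r, s, n, n > 0, gcd(r,n) = gcd(s,n) = 1. Then the canonical height of P is h(P) = log n. -/
import Mathlib


open Filter Real

/-- The defining equation of the Pell conic `X² - ΔY² = 4`. -/
def PellSol (Δ : ℚ) (P : ℚ × ℚ) : Prop := P.1 ^ 2 - Δ * P.2 ^ 2 = 4

/-- The rational points on the Pell conic `X² - ΔY² = 4`. -/
def Conic (Δ : ℚ) : Type := {P : ℚ × ℚ // PellSol Δ P}

namespace Conic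

variable {Δ : ℚ}

/-- Addition on the Pell conic. -/
instance : Add (Conic Δ) :=
  ⟨fun P Q => ⟨((P.val.1 * Q.val.1 + Δ * P.val.2 * Q.val.2) / 2,
    (P.val.1 * Q.val.2 + P.val.2 * Q.val.1) / 2), by
      have hP := P.property
      have hQ := Q.property
      unfold PellSol at *
      dsimp only
      linear_combination ((Q.val.1 ^ 2 - Δ * Q.val.2 ^ 2) / 4) * hP + hQ⟩⟩

/-- The neutral element `(2,0)` of the Pell conic. -/
instance : Zero (Conic Δ) := ⟨⟨(2, 0), by unfold PellSol; norm_num⟩⟩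

/-- The negative of a point on the Pell conic. -/
instance : Neg (Conic Δ) :=
  ⟨fun P => ⟨(P.val.1, -P.val.2), by
    have hP := P.property
    unfold PellSol at *
    dsimp only
    linear_combination hP⟩⟩

@[simp] lemma add_val (P Q : Conic Δ) :
    (P + Q).val = ((P.val.1 * Q.val.1 + Δ * P.val.2 * Q.val.2) / 2,
      (P.val.1 * Q.val.2 + P.val.2 * Q.val.1) / 2) := rfl

@[simp] lemma zero_val : ((0 : Conic Δ)).val = (2, 0) := rfl

@[simp] lemma neg_val (P : Conic Δ) : (-P).val = (P.val.1, -P.val.2) := rfl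

protected lemma add_assoc' (P Q R : Conic Δ) : P + Q + R = P + (Q + R) := by
  apply Subtype.ext
  rw [Prod.ext_iff, add_val, add_val, add_val, add_val]
  constructor <;> (dsimp only; ring)

protected lemma zero_add' (P : Conic Δ) : 0 + P = P := by
  apply Subtype.ext
  rw [Prod.ext_iff, add_val, zero_val]
  constructor <;> (dsimp only; ring)

protected lemma add_zero' (P : Conic Δ) : P + 0 = P := by
  apply Subtype.ext
  rw [Prod.ext_iff, add_val, zero_val]
  constructor <;> (dsimp only; ring)

protected lemma neg_add_cancel' (P : Conic Δ) : -P + P = 0 := by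
  have hP := P.property
  unfold PellSol at hP
  apply Subtype.ext
  rw [Prod.ext_iff, add_val, neg_val, zero_val]
  constructor
  · dsimp only
    linear_combination hP / 2
  · dsimp only; ring

protected lemma add_comm' (P Q : Conic Δ) : P + Q = Q + P := by
  apply Subtype.ext
  rw [Prod.ext_iff, add_val, add_val]
  constructor <;> (dsimp only; ring)

/-- The group structure on the rational points of the Pell conic. -/
instance : AddCommGroup (Conic Δ) where
  add := (· + ·)
  zero := 0
  neg := Neg.neg
  nsmul := nsmulRec
  zsmul := zsmulRec
  add_assoc := Conic.add_assoc'
  zero_add := Conic.zero_add'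
  add_zero := Conic.add_zero'
  neg_add_cancel := Conic.neg_add_cancel'
  add_comm := Conic.add_comm'

end Conic
section Extra

namespace Conic

variable {Δ : ℚ}

/-- The naive height of a point on a Pell conic: `H(x,y) = max(|num x|, den x)`. -/
noncomputable def height (P : Conic Δ) : ℝ :=
  max (|P.val.1.num| : ℝ) (P.val.1.den : ℝ)

/-- The logarithmic height `h₀(P) = log H(P)`. -/
noncomputable def logHeight (P : Conic Δ) : ℝ := Real.log (height P)

/-- The canonical height `h(P) = lim 2⁻ⁿ h₀(2ⁿ P)`. -/
noncomputable def canHeight (P : Conic Δ) : ℝ :=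
  limUnder atTop (fun n : ℕ => logHeight ((2 ^ n) • P) / 2 ^ n)

end Conic

/-- The integral points form a subgroup of the group of rational points on
the Pell conic `X² - ΔY² = 4` (for an integral `Δ`). -/
def intPoints (Δ : ℤ) : AddSubgroup (Conic (Δ : ℚ)) where
  carrier := {P | ∃ a b : ℤ, P.val = ((a : ℚ), (b : ℚ))}
  zero_mem' := ⟨2, 0, by rw [Conic.zero_val]; norm_num⟩
  neg_mem' := by
    rintro P ⟨a, b, h⟩
    exact ⟨a, -b, by rw [Conic.neg_val, h]; push_cast; rfl⟩
  add_mem' := by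
    rintro P Q ⟨a, b, hP⟩ ⟨c, e, hQ⟩
    have hPp := P.property
    have hQp := Q.property
    unfold PellSol at hPp hQp
    rw [hP] at hPp
    rw [hQ] at hQp
    dsimp only at hPp hQp
    have ha : a ^ 2 - Δ * b ^ 2 = 4 := by exact_mod_cast hPp
    have hc : c ^ 2 - Δ * e ^ 2 = 4 := by exact_mod_cast hQp
    have key : ∀ A B C E F : ZMod 2, A ^ 2 - F * B ^ 2 = 4 → C ^ 2 - F * E ^ 2 = 4 →
        (A * C + F * B * E = 0 ∧ A * E + B * C = 0) := by decide
    have ha2 : (a : ZMod 2) ^ 2 - (Δ : ZMod 2) * (b : ZMod 2) ^ 2 = 4 := by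
      have := congrArg (fun z : ℤ => (z : ZMod 2)) ha
      push_cast at this
      exact_mod_cast this
    have hc2 : (c : ZMod 2) ^ 2 - (Δ : ZMod 2) * (e : ZMod 2) ^ 2 = 4 := by
      have := congrArg (fun z : ℤ => (z : ZMod 2)) hc
      push_cast at this
      exact_mod_cast this
    obtain ⟨k1, k2⟩ := key (a : ZMod 2) (b : ZMod 2) (c : ZMod 2) (e : ZMod 2) (Δ : ZMod 2) ha2 hc2
    have d1 : (2 : ℤ) ∣ (a * c + Δ * b * e) := by
      have : ((a * c + Δ * b * e : ℤ) : ZMod 2) = 0 := by push_cast; linear_combination k1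
      exact_mod_cast (ZMod.intCast_zmod_eq_zero_iff_dvd _ 2).mp this
    have d2 : (2 : ℤ) ∣ (a * e + b * c) := by
      have : ((a * e + b * c : ℤ) : ZMod 2) = 0 := by push_cast; linear_combination k2
      exact_mod_cast (ZMod.intCast_zmod_eq_zero_iff_dvd _ 2).mp this
    obtain ⟨X, hX⟩ := d1
    obtain ⟨Y, hY⟩ := d2
    refine ⟨X, Y, ?_⟩
    rw [Conic.add_val, hP, hQ]
    have hX' : ((a : ℚ) * c + Δ * b * e) = 2 * X := by exact_mod_cast congrArg (fun z : ℤ => (z : ℚ)) hX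
    have hY' : ((a : ℚ) * e + b * c) = 2 * Y := by exact_mod_cast congrArg (fun z : ℤ => (z : ℚ)) hY
    rw [Prod.ext_iff]
    constructor
    · dsimp only
      rw [div_eq_iff (by norm_num : (2:ℚ) ≠ 0)]
      linarith [hX']
    · dsimp only
      rw [div_eq_iff (by norm_num : (2:ℚ) ≠ 0)]
      linarith [hY']

end Extra

section Aux

lemma aux_den_sq_sub_two (q : ℚ) : (q ^ 2 - 2).den = q.den ^ 2 := by
  have hden : (0:ℤ) < (q.den:ℤ)^2 := by positivity
  have hd0 : ((q.den:ℚ)) ≠ 0 := by exact_mod_cast q.den_ne_zero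
  have hnum : (q.num : ℚ) = q * q.den := (div_eq_iff hd0).mp (Rat.num_div_den q)
  have key : q ^ 2 - 2 = ((q.num^2 - 2*(q.den:ℤ)^2 : ℤ) : ℚ) / (((q.den:ℤ)^2 : ℤ) : ℚ) := by
    rw [eq_div_iff (by positivity)]
    push_cast
    linear_combination (-(q.num : ℚ) - q * q.den) * hnum
  have hcopND : IsCoprime (q.num) ((q.den : ℤ)) := by
    rw [Int.isCoprime_iff_gcd_eq_one]
    exact q.reduced
  have hcop2 : IsCoprime (q.num ^ 2) ((q.den : ℤ) ^ 2) := (hcopND.pow)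
  have hcop3 : IsCoprime (q.num^2 - 2*(q.den:ℤ)^2) ((q.den : ℤ) ^ 2) := by
    have := hcop2.add_mul_right_left (-2)
    simpa [sub_eq_add_neg, mul_comm, mul_assoc, mul_left_comm] using this
  have hcop : Nat.Coprime (q.num^2 - 2*(q.den:ℤ)^2).natAbs ((q.den:ℤ)^2).natAbs := by
    rw [Int.isCoprime_iff_gcd_eq_one] at hcop3
    exact hcop3
  have := Rat.den_div_eq_of_coprime hden hcop
  rw [key]
  have h2 : ((q.den:ℤ)^2) = ((q.den^2 : ℕ) : ℤ) := by push_cast; ring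
  omega

variable {δ : ℚ}

lemma aux_double_fst (Q : Conic δ) : (Q + Q).val.1 = Q.val.1 ^ 2 - 2 := by
  have h := Q.property
  unfold PellSol at h
  rw [Conic.add_val]
  dsimp only
  linear_combination -h / 2

lemma aux_abs_fst_le (hδ : δ ≤ 0) (Q : Conic δ) : |Q.val.1| ≤ 2 := by
  have h := Q.property
  unfold PellSol at h
  have h2 : Q.val.1 ^ 2 ≤ 4 := by nlinarith [sq_nonneg Q.val.2, sq_nonneg Q.val.1]
  rw [abs_le]
  constructor <;> nlinarith

lemma aux_num_le (q : ℚ) (hq : |q| ≤ 2) : |q.num| ≤ 2 * (q.den : ℤ) := by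
  have hd0 : ((q.den:ℚ)) ≠ 0 := by exact_mod_cast q.den_ne_zero
  have h1 : (q.num : ℚ) = q * q.den := (div_eq_iff hd0).mp (Rat.num_div_den q)
  have h2 : |(q.num : ℚ)| ≤ 2 * (q.den : ℚ) := by
    rw [h1, abs_mul, abs_of_nonneg (by positivity : (0:ℚ) ≤ (q.den:ℚ))]
    have : (0:ℚ) ≤ (q.den : ℚ) := by positivity
    nlinarith
  exact_mod_cast h2

lemma aux_den_nsmul (hδ : δ ≤ 0) (P : Conic δ) (k : ℕ) :
    ((2 ^ k) • P).val.1.den = P.val.1.den ^ (2 ^ k) := by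
  induction k with
  | zero => simp
  | succ k ih =>
      have hstep : (2 ^ (k+1)) • P = (2 ^ k) • P + (2 ^ k) • P := by
        rw [pow_succ, mul_two, add_nsmul]
      rw [hstep, aux_double_fst, aux_den_sq_sub_two, ih, ← pow_mul, pow_succ]

end Aux

/-- For `Δ < 0`, the canonical height of a rational point
`P = (r/n, s/n)` (in lowest terms, `n > 0`) on the Pell conic is `h(P) = log n`. -/
theorem canHeight_formula_neg (d : ℤ) (hsf : Squarefree d) (hd0 : d ≠ 0) (hd1 : d ≠ 1)
    (Δ : ℤ) (hΔ : Δ = if d % 4 = 1 then d else 4 * d) (hΔneg : Δ < 0)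
    (P : Conic (Δ : ℚ)) (r s n : ℤ) (hn : 0 < n)
    (hgr : Int.gcd r n = 1) (hgs : Int.gcd s n = 1)
    (hx : P.val.1 = (r : ℚ) / (n : ℚ)) (hy : P.val.2 = (s : ℚ) / (n : ℚ)) :
    Conic.canHeight P = Real.log ((n : ℤ) : ℝ) := by
  have hδ : ((Δ : ℚ)) ≤ 0 := by exact_mod_cast hΔneg.le
  set N : ℕ := n.toNat with hNdef
  have hNZ : (N : ℤ) = n := Int.toNat_of_nonneg hn.le
  have hN1 : 1 ≤ N := by omega
  have hbase : P.val.1.den = N := by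
    have h1 : ((P.val.1.den : ℤ)) = n := by
      rw [hx]
      exact Rat.den_div_eq_of_coprime (by exact_mod_cast hn) hgr
    omega
  have hden : ∀ k : ℕ, ((2 ^ k) • P).val.1.den = N ^ (2 ^ k) := by
    intro k
    rw [aux_den_nsmul hδ, hbase]
  -- bounds on logHeight
  have hbound : ∀ k : ℕ,
      Real.log N * 2 ^ k ≤ Conic.logHeight ((2 ^ k) • P) ∧
      Conic.logHeight ((2 ^ k) • P) ≤ Real.log N * 2 ^ k + Real.log 2 := by
    intro k
    set Q := (2 ^ k) • P with hQ
    set q := Q.val.1 with hqdef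
    have hdq : q.den = N ^ (2 ^ k) := hden k
    have hnum : |q.num| ≤ 2 * (q.den : ℤ) := aux_num_le q (aux_abs_fst_le hδ Q)
    have hd1 : (1 : ℝ) ≤ (q.den : ℝ) := by
      have : 1 ≤ q.den := q.pos
      exact_mod_cast this
    have hlogden : Real.log (q.den : ℝ) = Real.log N * 2 ^ k := by
      rw [hdq]
      push_cast
      rw [Real.log_pow]
      push_cast
      ring
    have hlb : (q.den : ℝ) ≤ max (|q.num| : ℝ) ((q.den : ℝ)) := le_max_right _ _
    have hub : max (|q.num| : ℝ) ((q.den : ℝ)) ≤ 2 * (q.den : ℝ) := by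
      apply max_le
      · exact_mod_cast hnum
      · linarith
    have hpos : (0 : ℝ) < (q.den : ℝ) := by linarith
    constructor
    · rw [← hlogden]
      exact Real.log_le_log hpos hlb
    · have := Real.log_le_log (lt_of_lt_of_le hpos hlb) hub
      rw [Real.log_mul (by norm_num) (ne_of_gt hpos), hlogden] at this
      unfold Conic.logHeight Conic.height
      rw [← hqdef]
      linarith [this]
  have h2pos : ∀ k : ℕ, (0 : ℝ) < 2 ^ k := fun k => by positivity
  have hlow : ∀ k : ℕ, Real.log N ≤ Conic.logHeight ((2 ^ k) • P) / 2 ^ k := by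
    intro k
    rw [le_div_iff₀ (h2pos k)]
    exact (hbound k).1
  have hup : ∀ k : ℕ, Conic.logHeight ((2 ^ k) • P) / 2 ^ k ≤
      Real.log N + Real.log 2 * (1 / 2 : ℝ) ^ k := by
    intro k
    rw [div_le_iff₀ (h2pos k)]
    have hhalf : (1 / 2 : ℝ) ^ k * 2 ^ k = 1 := by
      rw [← mul_pow]; norm_num
    calc Conic.logHeight ((2 ^ k) • P) ≤ Real.log N * 2 ^ k + Real.log 2 := (hbound k).2
      _ = (Real.log N + Real.log 2 * (1 / 2 : ℝ) ^ k) * 2 ^ k := by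
          rw [add_mul, mul_assoc, hhalf, mul_one]
  have t2 : Filter.Tendsto (fun k : ℕ => Real.log N + Real.log 2 * (1 / 2 : ℝ) ^ k)
      atTop (nhds (Real.log N)) := by
    have hp : Filter.Tendsto (fun k : ℕ => (1 / 2 : ℝ) ^ k) atTop (nhds 0) := by
      apply tendsto_pow_atTop_nhds_zero_of_lt_one <;> norm_num
    have := (tendsto_const_nhds (x := Real.log (N:ℝ)) (f := atTop (α := ℕ))).add
      ((tendsto_const_nhds (x := Real.log 2) (f := atTop (α := ℕ))).mul hp)
    simpa using this
  have htend : Filter.Tendsto (fun k : ℕ => Conic.logHeight ((2 ^ k) • P) / 2 ^ k)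
      atTop (nhds (Real.log N)) :=
    tendsto_of_tendsto_of_tendsto_of_le_of_le tendsto_const_nhds t2 hlow hup
  have hNr : ((N : ℕ) : ℝ) = ((n : ℤ) : ℝ) := by exact_mod_cast congrArg (Int.cast : ℤ → ℝ) hNZ
  unfold Conic.canHeight
  rw [← hNr]
  exact htend.limUnder_eq
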